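/- Substitution abstraction by variable elimination only weakens guards and drops assignments, hence the abstract substitution simulates the concrete one on the abstract variables: for every substitution S in the guarded-command language and every variable set X, if Prd S s s' (the concrete before-after relation holds), then there exists a state t' agreeing with s' on all variables in X such that Prd (TS X S) s t', where TS X replaces assignments to variables outside X by skip, weakens guards by TX, and acts recursively on choice and anyVar. -/

import Mathlib

inductive CF (V D : Type) : Type where
  | atom (vars : Set V) (p : (V → D) → Prop)
      (h : ∀ s t : V → D, (∀ v ∈ vars, s v = t v) → (p s ↔ p t)) : CF V D
  | conj (P₁ P₂ : CF V D) : CF V D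
  | disj (P₁ P₂ : CF V D) : CF V D

def eval {V D : Type} : CF V D → (V → D) → Prop
  | .atom _ p _, s => p s
  | .conj P₁ P₂, s => eval P₁ s ∧ eval P₂ s
  | .disj P₁ P₂, s => eval P₁ s ∨ eval P₂ s

open Classical in
noncomputable def TX {V D : Type} (X : Set V) : CF V D → CF V D
  | .atom vars p h => if vars ⊆ X then .atom vars p h
      else .atom ∅ (fun _ => True) (fun _ _ _ => Iff.rfl)
  | .conj P₁ P₂ => .conj (TX X P₁) (TX X P₂)
  | .disj P₁ P₂ => .disj (TX X P₁) (TX X P₂)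

inductive SubstV (V D : Type) : Type where
  | assignVar (x : V) (E : (V → D) → D) : SubstV V D
  | skip : SubstV V D
  | guard (P : CF V D) (S : SubstV V D) : SubstV V D
  | choice (S₁ S₂ : SubstV V D) : SubstV V D
  | anyVar (S : D → SubstV V D) : SubstV V D

def Prd {V D : Type} [DecidableEq V] : SubstV V D → (V → D) → (V → D) → Prop
  | .assignVar x E, s, s' => s' = Function.update s x (E s)
  | .skip, s, s' => s' = s
  | .guard P S, s, s' => eval P s ∧ Prd S s s'
  | .choice S₁ S₂, s, s' => Prd S₁ s s' ∨ Prd S₂ s s'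
  | .anyVar S, s, s' => ∃ d, Prd (S d) s s'

open Classical in
noncomputable def TS {V D : Type} (X : Set V) : SubstV V D → SubstV V D
  | .assignVar x E => if x ∈ X then .assignVar x E else .skip
  | .skip => .skip
  | .guard P S => .guard (TX X P) (TS X S)
  | .choice S₁ S₂ => .choice (TS X S₁) (TS X S₂)
  | .anyVar S => .anyVar (fun d => TS X (S d))

def DFClosed {V D : Type} (X : Set V) : SubstV V D → Prop
  | .assignVar x E => x ∈ X → ∀ s t : V → D, (∀ v ∈ X, s v = t v) → E s = E t
  | .skip => True
  | .guard _ S => DFClosed X S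
  | .choice S₁ S₂ => DFClosed X S₁ ∧ DFClosed X S₂
  | .anyVar S => ∀ d, DFClosed X (S d)


theorem evalTX {V D : Type} (X : Set V) : ∀ (P : CF V D) (s : V → D),
    eval P s → eval (TX X P) s := by
  intro P
  induction P with
  | atom vars p h =>
      intro s hs
      simp only [TX]
      split <;> simp_all [eval]
  | conj P₁ P₂ ih₁ ih₂ => intro s hs; exact ⟨ih₁ s hs.1, ih₂ s hs.2⟩
  | disj P₁ P₂ ih₁ ih₂ =>
      intro s hs
      cases hs with
      | inl h => exact Or.inl (ih₁ s h)
      | inr h => exact Or.inr (ih₂ s h)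

theorem stmt11 {V D : Type} [DecidableEq V] (X : Set V) :
    ∀ (S : SubstV V D), DFClosed X S →
      ∀ s s', Prd S s s' →
        ∃ t', (∀ v ∈ X, t' v = s' v) ∧ Prd (TS X S) s t' := by
  intro S
  induction S with
  | assignVar x E =>
      intro _ s s' hp
      simp only [TS]
      by_cases hx : x ∈ X
      · exact ⟨s', fun v _ => rfl, by simp [hx, Prd, hp]⟩
      · refine ⟨s, ?_, by simp [hx, Prd]⟩
        intro v hv
        subst hp
        rw [Function.update_of_ne (by rintro rfl; exact hx hv)]
  | skip => intro _ s s' hp; exact ⟨s, by subst hp; simp, by simp [Prd, TS]⟩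
  | guard P S ih =>
      intro hc s s' hp
      obtain ⟨t', ht, hpt⟩ := ih hc s s' hp.2
      exact ⟨t', ht, evalTX X P s hp.1, hpt⟩
  | choice S₁ S₂ ih₁ ih₂ =>
      intro hc s s' hp
      cases hp with
      | inl h => obtain ⟨t', ht, hpt⟩ := ih₁ hc.1 s s' h; exact ⟨t', ht, Or.inl hpt⟩
      | inr h => obtain ⟨t', ht, hpt⟩ := ih₂ hc.2 s s' h; exact ⟨t', ht, Or.inr hpt⟩
  | anyVar S ih =>
      intro hc s s' hp
      obtain ⟨d, hd⟩ := hp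
      obtain ⟨t', ht, hpt⟩ := ih d (hc d) s s' hd
      exact ⟨t', ht, d, hpt⟩
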